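/- (Laplace-transform identity underlying the scale-mixture representations) For all real numbers a ≥ 0 and b > 0, ∫₀^∞ t^{−1/2} · exp(−a/t − b·t) dt = √(π/b) · exp(−2√(a·b)). -/

import Mathlib

open MeasureTheory Real Set

/-- Cauchy–Schlömilch: `∫₀^∞ exp(-(q u - p/u)²) du = √π / (2 q)` for `p ≥ 0 < q`. -/
lemma gauss_shift_aux (p q : ℝ) (hp : 0 < p) (hq : 0 < q) :
    ∫ u in Ioi (0:ℝ), Real.exp (-(q * u - p / u) ^ 2) = Real.sqrt Real.pi / (2 * q) := by
  set g : ℝ → ℝ := fun u => q * u - p / u with hgdef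
  have hderiv : ∀ u ∈ Ioi (0:ℝ), HasDerivWithinAt g (q + p / u ^ 2) (Ioi 0) u := by
    intro u hu
    have hu0 : (0:ℝ) < u := hu
    have h1 : HasDerivAt (fun u : ℝ => q * u) q u := by
      simpa using (hasDerivAt_id u).const_mul q
    have h2 : HasDerivAt (fun u : ℝ => p / u) (-(p / u ^ 2)) u := by
      have := (hasDerivAt_inv hu0.ne').const_mul p
      simpa [div_eq_mul_inv, neg_div] using this
    have := h1.sub h2
    rw [sub_neg_eq_add] at this
    exact this.hasDerivWithinAt
  have hmono : StrictMonoOn g (Ioi 0) := by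
    intro u hu v hv huv
    have hu0 : (0:ℝ) < u := hu
    have hv0 : (0:ℝ) < v := hv
    have h1 : q * u < q * v := by gcongr
    have h2 : p / v < p / u := by gcongr
    simp only [hgdef]
    linarith
  have hinj : InjOn g (Ioi 0) := hmono.injOn
  have himg : g '' Ioi 0 = univ := by
    apply eq_univ_of_forall
    intro y
    set d : ℝ := Real.sqrt (y ^ 2 + 4 * p * q) with hd
    have hd2 : d ^ 2 = y ^ 2 + 4 * p * q := by
      rw [hd, sq_sqrt]; positivity
    have habs : |y| < d := by
      rw [hd, ← Real.sqrt_sq_eq_abs]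
      apply Real.sqrt_lt_sqrt (sq_nonneg y)
      nlinarith
    have hy : -y < d := by
      cases abs_lt.mp habs; linarith
    set u : ℝ := (y + d) / (2 * q) with hu
    have hu0 : 0 < u := by
      apply div_pos (by linarith) (by linarith)
    refine ⟨u, hu0, ?_⟩
    have hune : u ≠ 0 := hu0.ne'
    have hyd : y + d ≠ 0 := by
      intro hc
      rw [hu, hc] at hu0
      simp at hu0
    show q * u - p / u = y
    rw [hu]
    field_simp [hyd]
    nlinarith [hd2]
  -- Gaussian on ℝ
  have hG : Integrable (fun v : ℝ => Real.exp (-v ^ 2)) := by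
    have := integrable_exp_neg_mul_sq (one_pos)
    simpa using this
  have hGval : ∫ v : ℝ, Real.exp (-v ^ 2) = Real.sqrt Real.pi := by
    have := integral_gaussian 1
    simpa using this
  -- change of variables via g
  have key : ∫ v : ℝ, Real.exp (-v ^ 2) =
      ∫ u in Ioi (0:ℝ), |q + p / u ^ 2| • Real.exp (-(g u) ^ 2) := by
    rw [← setIntegral_univ, ← himg]
    exact integral_image_eq_integral_abs_deriv_smul measurableSet_Ioi hderiv hinj _
  have Kint : IntegrableOn (fun u => |q + p / u ^ 2| • Real.exp (-(g u) ^ 2)) (Ioi 0) := by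
    refine (integrableOn_image_iff_integrableOn_abs_deriv_smul measurableSet_Ioi hderiv hinj
      (fun v => Real.exp (-v ^ 2))).mp ?_
    rw [himg]
    exact hG.integrableOn
  -- the K integrand rewritten without abs
  have hKeq : ∀ u ∈ Ioi (0:ℝ), |q + p / u ^ 2| • Real.exp (-(g u) ^ 2)
      = (q + p / u ^ 2) * Real.exp (-(g u) ^ 2) := by
    intro u hu
    have hu0 : (0:ℝ) < u := hu
    rw [smul_eq_mul, abs_of_pos (by positivity)]
  -- integrability of I and J integrands
  have hcont : ContinuousOn (fun u : ℝ => Real.exp (-(g u) ^ 2)) (Ioi 0) := by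
    apply Real.continuous_exp.comp_continuousOn
    apply ContinuousOn.neg
    apply ContinuousOn.pow
    exact (continuousOn_const.mul continuousOn_id).sub
      (continuousOn_const.div continuousOn_id (fun x hx => ne_of_gt hx))
  have Iint : IntegrableOn (fun u => Real.exp (-(g u) ^ 2)) (Ioi 0) := by
    apply Integrable.mono' (Kint.const_mul q⁻¹)
      (hcont.aestronglyMeasurable measurableSet_Ioi)
    filter_upwards [ae_restrict_mem measurableSet_Ioi] with u hu
    have hu0 : (0:ℝ) < u := hu
    rw [hKeq u hu, norm_eq_abs, abs_of_pos (Real.exp_pos _)]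
    rw [← mul_assoc]
    have h1 : (1:ℝ) ≤ q⁻¹ * (q + p / u ^ 2) := by
      rw [inv_mul_eq_div, le_div_iff₀ hq]
      have : 0 ≤ p / u ^ 2 := by positivity
      linarith
    nlinarith [Real.exp_pos (-(g u)^2), h1]
  have Jint : IntegrableOn (fun u => p / q / u ^ 2 * Real.exp (-(g u) ^ 2)) (Ioi 0) := by
    have hmeas : ContinuousOn (fun u : ℝ => p / q / u ^ 2 * Real.exp (-(g u) ^ 2)) (Ioi 0) := by
      apply ContinuousOn.mul _ hcont
      exact continuousOn_const.div ((continuous_pow 2).continuousOn)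
        (fun x hx => pow_ne_zero 2 (ne_of_gt hx))
    apply Integrable.mono' (Kint.const_mul q⁻¹)
      (hmeas.aestronglyMeasurable measurableSet_Ioi)
    filter_upwards [ae_restrict_mem measurableSet_Ioi] with u hu
    have hu0 : (0:ℝ) < u := hu
    rw [hKeq u hu, norm_eq_abs]
    rw [abs_of_nonneg (mul_nonneg (div_nonneg (div_nonneg hp.le hq.le) (sq_nonneg u))
      (Real.exp_pos _).le)]
    rw [← mul_assoc]
    have h1 : p / q / u ^ 2 ≤ q⁻¹ * (q + p / u ^ 2) := by
      have e1 : p / q / u ^ 2 = p / (q * u ^ 2) := by rw [div_div]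
      have e2 : q⁻¹ * (q + p / u ^ 2) = 1 + p / (q * u ^ 2) := by field_simp
      rw [e1, e2]
      linarith
    exact mul_le_mul_of_nonneg_right h1 (Real.exp_pos _).le
  -- second substitution: I = J
  have hIJ : ∫ u in Ioi (0:ℝ), Real.exp (-(g u) ^ 2)
      = ∫ u in Ioi (0:ℝ), p / q / u ^ 2 * Real.exp (-(g u) ^ 2) := by
    set h : ℝ → ℝ := fun u => (p / q) / u with hhdef
    have himgh : h '' Ioi 0 = Ioi 0 := by
      ext v
      constructor
      · rintro ⟨u, hu, rfl⟩
        have hu0 : (0:ℝ) < u := hu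
        show (0:ℝ) < (p/q)/u
        exact div_pos (div_pos hp hq) hu0
      · intro hv
        have hv0 : (0:ℝ) < v := hv
        refine ⟨(p / q) / v, Set.mem_Ioi.mpr (div_pos (div_pos hp hq) hv0), ?_⟩
        show (p/q) / ((p/q)/v) = v
        rw [div_div_eq_mul_div, mul_div_assoc]
        field_simp
    have hderivh : ∀ u ∈ Ioi (0:ℝ), HasDerivWithinAt h (-((p/q) / u ^ 2)) (Ioi 0) u := by
      intro u hu
      have hu0 : (0:ℝ) < u := hu
      have := (hasDerivAt_inv hu0.ne').const_mul (p/q)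
      have h2 : HasDerivAt h (-((p/q) / u^2)) u := by
        simpa [hhdef, div_eq_mul_inv, neg_div] using this
      exact h2.hasDerivWithinAt
    have hinjh : InjOn h (Ioi 0) := by
      intro u hu v hv huv
      have hu0 : (0:ℝ) < u := hu
      have hv0 : (0:ℝ) < v := hv
      have hpq : (0:ℝ) < p/q := by positivity
      have huv' : (p/q) * v = (p/q) * u := (div_eq_div_iff hu0.ne' hv0.ne').mp huv
      exact (mul_left_cancel₀ hpq.ne' huv').symm
    calc ∫ u in Ioi (0:ℝ), Real.exp (-(g u) ^ 2)
        = ∫ u in h '' Ioi (0:ℝ), Real.exp (-(g u) ^ 2) := by rw [himgh]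
      _ = ∫ u in Ioi (0:ℝ), |(-((p/q) / u ^ 2))| • Real.exp (-(g (h u)) ^ 2) :=
          integral_image_eq_integral_abs_deriv_smul measurableSet_Ioi hderivh hinjh _
      _ = ∫ u in Ioi (0:ℝ), p / q / u ^ 2 * Real.exp (-(g u) ^ 2) := by
          apply setIntegral_congr_fun measurableSet_Ioi
          intro u hu
          have hu0 : (0:ℝ) < u := hu
          have hgh : g (h u) = -(g u) := by
            simp only [hgdef, hhdef]
            rw [div_div_eq_mul_div, div_div_eq_mul_div, mul_div_assoc]
            field_simp
            ring
          show |(-((p/q) / u ^ 2))| • Real.exp (-(g (h u)) ^ 2)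
              = p / q / u ^ 2 * Real.exp (-(g u) ^ 2)
          rw [hgh, neg_sq, smul_eq_mul, abs_neg, abs_of_nonneg (by positivity)]

  -- combine
  have hsum : Real.sqrt Real.pi
      = q * ((∫ u in Ioi (0:ℝ), Real.exp (-(g u) ^ 2))
          + ∫ u in Ioi (0:ℝ), p / q / u ^ 2 * Real.exp (-(g u) ^ 2)) := by
    rw [← hGval, key]
    rw [setIntegral_congr_fun measurableSet_Ioi hKeq]
    rw [← integral_add Iint Jint, ← integral_const_mul]
    apply setIntegral_congr_fun measurableSet_Ioi
    intro u hu
    have hu0 : (0:ℝ) < u := hu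
    field_simp
  rw [← hIJ] at hsum
  have : Real.sqrt Real.pi = 2 * q * ∫ u in Ioi (0:ℝ), Real.exp (-(g u) ^ 2) := by
    rw [hsum]; ring
  rw [this]
  exact (mul_div_cancel_left₀ _ (by positivity : (2 * q) ≠ 0)).symm

lemma gauss_shift (p q : ℝ) (hp : 0 ≤ p) (hq : 0 < q) :
    ∫ u in Ioi (0:ℝ), Real.exp (-(q * u - p / u) ^ 2) = Real.sqrt Real.pi / (2 * q) := by
  rcases hp.lt_or_eq with h | h
  · exact gauss_shift_aux p q h hq
  · have h0 : p = 0 := h.symm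
    subst h0
    have : ∫ u in Ioi (0:ℝ), Real.exp (-(q * u - 0 / u) ^ 2)
        = ∫ u in Ioi (0:ℝ), Real.exp (-(q ^ 2) * u ^ 2) := by
      apply setIntegral_congr_fun measurableSet_Ioi
      intro u _
      simp only [zero_div, sub_zero, mul_pow, neg_mul]
    rw [this, integral_gaussian_Ioi]
    rw [show Real.pi / q ^ 2 = Real.pi / q ^ 2 from rfl]
    rw [Real.sqrt_div pi_pos.le, Real.sqrt_sq hq.le]
    ring

/-- **Laplace-transform identity underlying the scale-mixture representations.**
For all `a ≥ 0` and `b > 0`,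
`∫₀^∞ t^{-1/2} exp(-a/t - b t) dt = √(π/b) exp(-2 √(a b))`. -/
theorem laplace_transform_identity (a b : ℝ) (ha : 0 ≤ a) (hb : 0 < b) :
    ∫ t in Set.Ioi (0 : ℝ), t ^ (-(1 : ℝ) / 2) * Real.exp (-a / t - b * t) =
      Real.sqrt (Real.pi / b) * Real.exp (-2 * Real.sqrt (a * b)) := by
  set p := Real.sqrt a with hpdef
  set q := Real.sqrt b with hqdef
  have hp0 : 0 ≤ p := Real.sqrt_nonneg a
  have hq0 : 0 < q := Real.sqrt_pos.mpr hb
  have hp2 : p ^ 2 = a := Real.sq_sqrt ha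
  have hq2 : q ^ 2 = b := Real.sq_sqrt hb.le
  have hsq_deriv : ∀ u ∈ Ioi (0:ℝ), HasDerivWithinAt (fun u : ℝ => u ^ 2) (2 * u) (Ioi 0) u := by
    intro u _
    have := hasDerivAt_pow 2 u
    norm_num at this
    exact this.hasDerivWithinAt
  have hsq_inj : InjOn (fun u : ℝ => u ^ 2) (Ioi 0) := by
    intro u hu v hv huv
    have hu0 : (0:ℝ) < u := hu
    have hv0 : (0:ℝ) < v := hv
    have huv' : u ^ 2 = v ^ 2 := huv
    nlinarith [huv']
  have hsq_img : (fun u : ℝ => u ^ 2) '' Ioi 0 = Ioi 0 := by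
    ext t
    constructor
    · rintro ⟨u, hu, rfl⟩
      exact pow_pos (mem_Ioi.mp hu) 2
    · intro ht
      have ht0 : (0:ℝ) < t := ht
      exact ⟨Real.sqrt t, Real.sqrt_pos.mpr ht0, Real.sq_sqrt ht0.le⟩
  have step1 : (∫ t in Ioi (0:ℝ), t ^ (-(1:ℝ)/2) * Real.exp (-a / t - b * t))
      = ∫ u in Ioi (0:ℝ), |2 * u| • (((u ^ 2 : ℝ)) ^ (-(1:ℝ)/2)
          * Real.exp (-a / u ^ 2 - b * u ^ 2)) := by
    calc (∫ t in Ioi (0:ℝ), t ^ (-(1:ℝ)/2) * Real.exp (-a / t - b * t))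
        = ∫ t in (fun u : ℝ => u ^ 2) '' Ioi 0, t ^ (-(1:ℝ)/2) * Real.exp (-a / t - b * t) := by
          rw [hsq_img]
      _ = ∫ u in Ioi (0:ℝ), |2 * u| • (((u ^ 2 : ℝ)) ^ (-(1:ℝ)/2)
            * Real.exp (-a / u ^ 2 - b * u ^ 2)) :=
          integral_image_eq_integral_abs_deriv_smul measurableSet_Ioi hsq_deriv hsq_inj _
  rw [step1]
  have step2 : ∫ u in Ioi (0:ℝ), |2 * u| • (((u ^ 2 : ℝ)) ^ (-(1:ℝ)/2)
          * Real.exp (-a / u ^ 2 - b * u ^ 2))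
      = ∫ u in Ioi (0:ℝ), (2 * Real.exp (-(2 * (p * q))))
          * Real.exp (-(q * u - p / u) ^ 2) := by
    apply setIntegral_congr_fun measurableSet_Ioi
    intro u hu
    have hu0 : (0:ℝ) < u := hu
    have hrpow : ((u ^ 2 : ℝ)) ^ (-(1:ℝ)/2) = u⁻¹ := by
      rw [← Real.rpow_natCast u 2, ← Real.rpow_mul hu0.le]
      norm_num
      exact Real.rpow_neg_one u
    have hexp : -a / u ^ 2 - b * u ^ 2 = -(q * u - p / u) ^ 2 + -(2 * (p * q)) := by
      rw [← hp2, ← hq2]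
      field_simp
      ring
    simp only []
    rw [hrpow, hexp, Real.exp_add, smul_eq_mul, abs_of_pos (by positivity : (0:ℝ) < 2 * u)]
    field_simp
  rw [step2, integral_const_mul, gauss_shift p q hp0 hq0]
  rw [Real.sqrt_div pi_pos.le, ← hqdef, show Real.sqrt (a * b) = p * q from Real.sqrt_mul ha b]
  rw [show (-2 : ℝ) * (p * q) = -(2 * (p * q)) by ring]
  field_simp
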